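/- Let F: ℝᵐ × ℝⁿ → ℝ with ∇F jointly L-Lipschitz, let f(x) = min_y F(x, y) with minimizer y(x) for each x. Suppose the gradient mapping x ↦ ∇_x F(x, y(x)) equals ∇f(x). Then f has L-Lipschitz gradient: ‖∇f(x') - ∇f(x)‖ ≤ L‖x' - x‖ for all x, x'. -/

import Mathlib

open RealInnerProductSpace

section Aux

variable {E : Type*} [NormedAddCommGroup E] [InnerProductSpace ℝ E]

open intervalIntegral in
/-- Descent lemma: convex with Lipschitz (sub)gradient implies quadratic upper bound. -/
lemma descent_aux (G : E → ℝ) (g : E → E) (L : ℝ) (hL : 0 ≤ L)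
    (hsub : ∀ p q : E, G p + ⟪g p, q - p⟫ ≤ G q)
    (hlip : ∀ p q : E, ‖g p - g q‖ ≤ L * ‖p - q‖) (p q : E) :
    G q ≤ G p + ⟪g p, q - p⟫ + L / 2 * ‖q - p‖ ^ 2 := by
  set d : E := q - p with hd
  set h : ℝ → ℝ := fun t => G (p + t • d) with hh
  set φ : ℝ → ℝ := fun t => ⟪g (p + t • d), d⟫ with hφ
  set C : ℝ := L * ‖d‖ ^ 2 with hC
  have hC0 : 0 ≤ C := by positivity
  have key : ∀ s t : ℝ, h t + φ t * (s - t) ≤ h s := by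
    intro s t
    have := hsub (p + t • d) (p + s • d)
    have e1 : (p + s • d) - (p + t • d) = (s - t) • d := by
      rw [sub_smul]; abel
    rw [e1, real_inner_smul_right] at this
    simpa [h, φ, mul_comm] using this
  have philip : ∀ s t : ℝ, |φ s - φ t| ≤ C * |s - t| := by
    intro s t
    have e1 : φ s - φ t = ⟪g (p + s • d) - g (p + t • d), d⟫ := by
      simp [φ, inner_sub_left]
    rw [e1]
    calc |⟪g (p + s • d) - g (p + t • d), d⟫|
        ≤ ‖g (p + s • d) - g (p + t • d)‖ * ‖d‖ := abs_real_inner_le_norm _ _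
      _ ≤ (L * ‖(p + s • d) - (p + t • d)‖) * ‖d‖ := by
          gcongr; exact hlip _ _
      _ = C * |s - t| := by
          have : (p + s • d) - (p + t • d) = (s - t) • d := by
            rw [sub_smul]; abel
          rw [this, norm_smul, Real.norm_eq_abs, hC]; ring
  have hquad : ∀ s t : ℝ, |h s - h t - (s - t) * φ t| ≤ C * (s - t) ^ 2 := by
    intro s t
    have h1 : 0 ≤ h s - h t - (s - t) * φ t := by
      have := key s t
      nlinarith [this]
    have h2 : h s - h t - (s - t) * φ t ≤ (φ s - φ t) * (s - t) := by
      have := key t s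
      nlinarith [this]
    rw [abs_of_nonneg h1]
    calc h s - h t - (s - t) * φ t ≤ (φ s - φ t) * (s - t) := h2
      _ ≤ |φ s - φ t| * |s - t| := by
          rw [← abs_mul]; exact le_abs_self _
      _ ≤ (C * |s - t|) * |s - t| := by gcongr; exact philip s t
      _ = C * (s - t) ^ 2 := by rw [← sq_abs (s - t)]; ring
  have hderiv : ∀ t : ℝ, HasDerivAt h (φ t) t := by
    intro t
    rw [hasDerivAt_iff_isLittleO]
    rw [Asymptotics.isLittleO_iff]
    intro ε hε
    have hball : ∀ᶠ s in nhds t, |s - t| ≤ ε / (C + 1) := by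
      have h' : (0:ℝ) < ε / (C + 1) := by positivity
      filter_upwards [Metric.ball_mem_nhds t h'] with s hs
      exact le_of_lt (by simpa [Real.dist_eq] using hs)
    filter_upwards [hball] with s hs
    have := hquad s t
    have hb : C * (s - t) ^ 2 ≤ ε * |s - t| := by
      have h1 : C * (s - t) ^ 2 = (C * |s - t|) * |s - t| := by
        rw [← sq_abs]; ring
      rw [h1]
      have : C * |s - t| ≤ ε := by
        have hC1 : C ≤ C + 1 := by linarith
        calc C * |s - t| ≤ (C + 1) * (ε / (C + 1)) := by
              apply mul_le_mul hC1 hs (abs_nonneg _) (by positivity)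
          _ = ε := by field_simp
      exact mul_le_mul_of_nonneg_right this (abs_nonneg _)
    calc ‖h s - h t - (s - t) • φ t‖ = |h s - h t - (s - t) * φ t| := by
          simp [Real.norm_eq_abs]
      _ ≤ C * (s - t) ^ 2 := this
      _ ≤ ε * |s - t| := hb
      _ = ε * ‖s - t‖ := by rw [Real.norm_eq_abs]
  have hφcont : Continuous φ := by
    have : LipschitzWith (Real.toNNReal C) φ := by
      rw [lipschitzWith_iff_dist_le_mul]
      intro s t
      rw [Real.dist_eq, Real.dist_eq]
      calc |φ s - φ t| ≤ C * |s - t| := philip s t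
        _ ≤ (Real.toNNReal C) * |s - t| := by
            gcongr; exact Real.le_coe_toNNReal C
    exact this.continuous
  have hftc : ∫ t in (0:ℝ)..1, φ t = h 1 - h 0 :=
    intervalIntegral.integral_eq_sub_of_hasDerivAt (fun t _ => hderiv t)
      (hφcont.intervalIntegrable 0 1)
  have hint1 : IntervalIntegrable (fun _ : ℝ => φ 0) MeasureTheory.volume 0 1 :=
    intervalIntegrable_const
  have hint2 : IntervalIntegrable (fun t : ℝ => C * t) MeasureTheory.volume 0 1 :=
    (continuous_const.mul continuous_id).intervalIntegrable 0 1
  have hmono : ∫ t in (0:ℝ)..1, φ t ≤ ∫ t in (0:ℝ)..1, (φ 0 + C * t) := by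
    apply intervalIntegral.integral_mono_on (by norm_num)
      (hφcont.intervalIntegrable 0 1) (hint1.add hint2)
    intro t ht
    have h2 := (abs_le.mp (philip t 0)).2
    rw [sub_zero, abs_of_nonneg ht.1] at h2
    linarith
  have hval : ∫ t in (0:ℝ)..1, (φ 0 + C * t) = φ 0 + C / 2 := by
    have hid : (∫ x in (0:ℝ)..1, x) = 1 / 2 := by
      rw [integral_id]; norm_num
    rw [intervalIntegral.integral_add hint1 hint2, intervalIntegral.integral_const,
      intervalIntegral.integral_const_mul, hid]
    norm_num
    ring
  have h0 : h 0 = G p := by simp [h]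
  have h1 : h 1 = G q := by simp [h, hd]
  have hφ0 : φ 0 = ⟪g p, q - p⟫ := by simp [φ, hd]
  have : h 1 - h 0 ≤ φ 0 + C / 2 := by rw [← hftc]; linarith [hmono, hval.le, hval.ge]
  rw [h0, h1, hφ0] at this
  have : G q ≤ G p + ⟪g p, q - p⟫ + C / 2 := by linarith
  calc G q ≤ G p + ⟪g p, q - p⟫ + C / 2 := this
    _ = G p + ⟪g p, q - p⟫ + L / 2 * ‖q - p‖ ^ 2 := by rw [hC]; ring

/-- Cocoercivity of the gradient. -/
lemma cocoercive_aux (G : E → ℝ) (g : E → E) (L : ℝ) (hL : 0 ≤ L)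
    (hsub : ∀ p q : E, G p + ⟪g p, q - p⟫ ≤ G q)
    (hlip : ∀ p q : E, ‖g p - g q‖ ≤ L * ‖p - q‖) (p q : E) :
    ‖g q - g p‖ ^ 2 ≤ L * ⟪g q - g p, q - p⟫ := by
  rcases eq_or_lt_of_le hL with hL0 | hLpos
  · have : ‖g q - g p‖ ≤ 0 := by
      have := hlip q p
      rw [← hL0] at this
      simpa using this
    have : ‖g q - g p‖ = 0 := le_antisymm this (norm_nonneg _)
    rw [← hL0]
    simp [this]
  · -- one-sided bound, applied twice
    have onesided : ∀ a b : E,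
        G a + ⟪g a, b - a⟫ + 1 / (2 * L) * ‖g b - g a‖ ^ 2 ≤ G b := by
      intro a b
      set r : E := b - (1 / L) • (g b - g a) with hr
      have hlow : G a + ⟪g a, r - a⟫ ≤ G r := hsub a r
      have hup : G r ≤ G b + ⟪g b, r - b⟫ + L / 2 * ‖r - b‖ ^ 2 :=
        descent_aux G g L hL hsub hlip b r
      have hrb : r - b = -((1 / L) • (g b - g a)) := by rw [hr]; abel
      have e1 : ⟪g b, r - b⟫ = -(1 / L) * ⟪g b, g b - g a⟫ := by
        rw [hrb, inner_neg_right, real_inner_smul_right]; ring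
      have e2 : ‖r - b‖ ^ 2 = (1 / L) ^ 2 * ‖g b - g a‖ ^ 2 := by
        rw [hrb, norm_neg, norm_smul, Real.norm_eq_abs, abs_of_nonneg (by positivity : (0:ℝ) ≤ 1 / L)]
        ring
      have e3 : ⟪g a, r - a⟫ = ⟪g a, b - a⟫ - (1 / L) * ⟪g a, g b - g a⟫ := by
        have : r - a = (b - a) - (1 / L) • (g b - g a) := by rw [hr]; abel
        rw [this, inner_sub_right, real_inner_smul_right]
      have e4 : ⟪g b, g b - g a⟫ - ⟪g a, g b - g a⟫ = ‖g b - g a‖ ^ 2 := by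
        rw [← inner_sub_left, real_inner_self_eq_norm_sq]
      have hLne : L ≠ 0 := ne_of_gt hLpos
      rw [e3] at hlow
      rw [e1, e2] at hup
      have : G a + ⟪g a, b - a⟫ - (1 / L) * ⟪g a, g b - g a⟫ ≤
          G b - (1 / L) * ⟪g b, g b - g a⟫ + L / 2 * ((1 / L) ^ 2 * ‖g b - g a‖ ^ 2) := by
        linarith
      have hfield : L / 2 * ((1 / L) ^ 2 * ‖g b - g a‖ ^ 2) = 1 / (2 * L) * ‖g b - g a‖ ^ 2 := by
        field_simp
      rw [hfield] at this
      have e4' : 1 / L * ⟪g b, g b - g a⟫ - 1 / L * ⟪g a, g b - g a⟫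
          = 1 / L * ‖g b - g a‖ ^ 2 := by rw [← mul_sub, e4]
      have e8 : 1 / L * ‖g b - g a‖ ^ 2 = 1 / (2 * L) * ‖g b - g a‖ ^ 2
          + 1 / (2 * L) * ‖g b - g a‖ ^ 2 := by
        field_simp; ring
      linarith [this, e4', e8]
    have h1 := onesided p q
    have h2 := onesided q p
    have e5 : ⟪g q, p - q⟫ = -⟪g q, q - p⟫ := by
      rw [← inner_neg_right]; congr 1; abel
    have e6 : ‖g p - g q‖ = ‖g q - g p‖ := by rw [← norm_neg]; congr 1; abel
    have e7 : ⟪g p, q - p⟫ - ⟪g q, q - p⟫ = -⟪g q - g p, q - p⟫ := by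
      rw [← inner_sub_left, ← inner_neg_left]; congr 1; abel
    rw [e5, e6] at h2
    have hsum : 1 / (2 * L) * ‖g q - g p‖ ^ 2 + 1 / (2 * L) * ‖g q - g p‖ ^ 2
        ≤ ⟪g q - g p, q - p⟫ := by nlinarith [h1, h2, e7]
    calc ‖g q - g p‖ ^ 2
        = L * (1 / (2 * L) * ‖g q - g p‖ ^ 2 + 1 / (2 * L) * ‖g q - g p‖ ^ 2) := by
          field_simp; ring
      _ ≤ L * ⟪g q - g p, q - p⟫ := mul_le_mul_of_nonneg_left hsum hL

end Aux

/-- If `F(x,y)` is jointly convex with jointly `L`-Lipschitz gradient `(gx, gy)`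
(Euclidean product norm), the inner minimizer `yx x` satisfies `gy x (yx x) = 0`,
and `∇f(x) = gx x (yx x)` (Danskin), then `∇f` is `L`-Lipschitz. -/
theorem stmt_5 {m n : ℕ} (F : EuclideanSpace ℝ (Fin m) → EuclideanSpace ℝ (Fin n) → ℝ)
    (gx : EuclideanSpace ℝ (Fin m) → EuclideanSpace ℝ (Fin n) → EuclideanSpace ℝ (Fin m))
    (gy : EuclideanSpace ℝ (Fin m) → EuclideanSpace ℝ (Fin n) → EuclideanSpace ℝ (Fin n))
    (yx : EuclideanSpace ℝ (Fin m) → EuclideanSpace ℝ (Fin n))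
    (f : EuclideanSpace ℝ (Fin m) → ℝ)
    (gradf : EuclideanSpace ℝ (Fin m) → EuclideanSpace ℝ (Fin m))
    (L : ℝ) (hL : 0 ≤ L)
    (hconv : ConvexOn ℝ Set.univ (fun p : EuclideanSpace ℝ (Fin m) × EuclideanSpace ℝ (Fin n) => F p.1 p.2))
    (hgrad : ∀ x y, ∀ x' y',
      F x' y' ≥ F x y + ⟪gx x y, x' - x⟫ + ⟪gy x y, y' - y⟫)
    (hlip : ∀ x y x' y',
      Real.sqrt (‖gx x y - gx x' y'‖ ^ 2 + ‖gy x y - gy x' y'‖ ^ 2) ≤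
        L * Real.sqrt (‖x - x'‖ ^ 2 + ‖y - y'‖ ^ 2))
    (hmin : ∀ x y, F x (yx x) ≤ F x y)
    (hopt : ∀ x, gy x (yx x) = 0)
    (hf : ∀ x, f x = F x (yx x))
    (hdanskin : ∀ x, gradf x = gx x (yx x)) :
    ∀ x x', ‖gradf x' - gradf x‖ ≤ L * ‖x' - x‖ := by
  intro x x'
  set P := WithLp 2 (EuclideanSpace ℝ (Fin m) × EuclideanSpace ℝ (Fin n)) with hP
  set e := (WithLp.linearEquiv 2 ℝ (EuclideanSpace ℝ (Fin m) × EuclideanSpace ℝ (Fin n))).symm with he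
  set G : P → ℝ := fun p => F p.fst p.snd with hG
  set g : P → P := fun p => e (gx p.fst p.snd, gy p.fst p.snd) with hg
  have hfst : ∀ a b, (e (a, b)).fst = a := fun _ _ => rfl
  have hsnd : ∀ a b, (e (a, b)).snd = b := fun _ _ => rfl
  have hsub : ∀ p q : P, G p + ⟪g p, q - p⟫ ≤ G q := by
    intro p q
    have := hgrad p.fst p.snd q.fst q.snd
    have hinner : ⟪g p, q - p⟫ = ⟪gx p.fst p.snd, q.fst - p.fst⟫ + ⟪gy p.fst p.snd, q.snd - p.snd⟫ := by
      rw [WithLp.prod_inner_apply]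
      rfl
    rw [hinner]
    simp only [hG]
    linarith [this]
  have hlip' : ∀ p q : P, ‖g p - g q‖ ≤ L * ‖p - q‖ := by
    intro p q
    have h1 : ‖g p - g q‖ =
        Real.sqrt (‖gx p.fst p.snd - gx q.fst q.snd‖ ^ 2 + ‖gy p.fst p.snd - gy q.fst q.snd‖ ^ 2) := by
      rw [WithLp.prod_norm_eq_of_L2]
      rfl
    have h2 : ‖p - q‖ = Real.sqrt (‖p.fst - q.fst‖ ^ 2 + ‖p.snd - q.snd‖ ^ 2) := by
      rw [WithLp.prod_norm_eq_of_L2]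
      rfl
    rw [h1, h2]
    exact hlip p.fst p.snd q.fst q.snd
  set pt : P := e (x, yx x) with hpt
  set qt : P := e (x', yx x') with hqt
  have hcoco := cocoercive_aux G g L hL hsub hlip' pt qt
  have hgp : g pt = e (gradf x, 0) := by
    show e (gx x (yx x), gy x (yx x)) = e (gradf x, 0)
    rw [hopt, hdanskin]
  have hgq : g qt = e (gradf x', 0) := by
    show e (gx x' (yx x'), gy x' (yx x')) = e (gradf x', 0)
    rw [hopt, hdanskin]
  have hdiff : g qt - g pt = e (gradf x' - gradf x, 0) := by
    rw [hgp, hgq, ← map_sub, Prod.mk_sub_mk, sub_zero]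
  have hqp : qt - pt = e (x' - x, yx x' - yx x) := by
    rw [hpt, hqt, ← map_sub, Prod.mk_sub_mk]
  have hnormdiff : ‖g qt - g pt‖ = ‖gradf x' - gradf x‖ := by
    rw [hdiff, WithLp.prod_norm_eq_of_L2, hfst, hsnd, norm_zero]
    rw [zero_pow (by norm_num : (2:ℕ) ≠ 0), add_zero, Real.sqrt_sq (norm_nonneg _)]
  have hinnerdiff : ⟪g qt - g pt, qt - pt⟫ = ⟪gradf x' - gradf x, x' - x⟫ := by
    rw [hdiff, hqp, WithLp.prod_inner_apply]
    show ⟪gradf x' - gradf x, x' - x⟫ + ⟪(0 : EuclideanSpace ℝ (Fin n)), yx x' - yx x⟫ = _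
    simp
  rw [hnormdiff, hinnerdiff] at hcoco
  have hcs : ⟪gradf x' - gradf x, x' - x⟫ ≤ ‖gradf x' - gradf x‖ * ‖x' - x‖ :=
    real_inner_le_norm _ _
  rcases eq_or_lt_of_le (norm_nonneg (gradf x' - gradf x)) with h0 | h0
  · rw [← h0]; positivity
  · have : ‖gradf x' - gradf x‖ ^ 2 ≤ L * (‖gradf x' - gradf x‖ * ‖x' - x‖) := by
      calc ‖gradf x' - gradf x‖ ^ 2 ≤ L * ⟪gradf x' - gradf x, x' - x⟫ := hcoco
        _ ≤ L * (‖gradf x' - gradf x‖ * ‖x' - x‖) := by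
            apply mul_le_mul_of_nonneg_left hcs hL
    nlinarith [this, h0]
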